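/- If the total weights of two alternating weight-label lists input to FreeMerge are equal, i.e. Σ_{i=1}^m wᵢˣ = Σ_{j=1}^n wⱼʸ, then the last weight in the output list FreeMerge(X, Y) equals 0. -/

import Mathlib

noncomputable def freeMerge {α : Type*} : List (ℝ × α) → List (ℝ × α) → List (ℝ × α)
  | [], Y => Y
  | X, [] => X
  | (wx, x) :: X, (wy, y) :: Y =>
      if wx < wy then (wx, x) :: freeMerge X ((wy - wx, y) :: Y)
      else (wy, y) :: freeMerge ((wx - wy, x) :: X) Y
termination_by X Y => X.length + Y.length
decreasing_by all_goals simp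

private lemma freeMerge_nil_right {α : Type*} (X : List (ℝ × α)) : freeMerge X [] = X := by
  cases X <;> simp [freeMerge]

private lemma all_zero_of_sum_zero (l : List ℝ) (h : ∀ x ∈ l, 0 ≤ x) (hs : l.sum = 0) :
    ∀ x ∈ l, x = 0 := fun x hx =>
  le_antisymm (hs ▸ List.single_le_sum h x hx) (h x hx)

private lemma getLast?_cons_of_ne_nil {α : Type*} (a : α) (l : List α) (h : l ≠ []) :
    (a :: l).getLast? = l.getLast? := by
  cases l with
  | nil => exact absurd rfl h
  | cons b t => exact List.getLast?_cons_cons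

private lemma freeMerge_aux {α : Type*} : ∀ n (X Y : List (ℝ × α)),
    X.length + Y.length ≤ n →
    (∀ p ∈ X, 0 ≤ p.1) → (∀ p ∈ Y, 0 ≤ p.1) → X ≠ [] → Y ≠ [] →
    (X.map Prod.fst).sum = (Y.map Prod.fst).sum →
    ∃ p : ℝ × α, (freeMerge X Y).getLast? = some p ∧ p.1 = 0 := by
  intro n
  induction n with
  | zero =>
    intro X Y hlen _ _ hX _ _
    cases X with
    | nil => exact absurd rfl hX
    | cons a t => simp at hlen
  | succ n ih =>
    intro X Y hlen hwX hwY hX hY hsum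
    match X, Y with
    | [], _ => exact absurd rfl hX
    | _ :: _, [] => exact absurd rfl hY
    | (wx, x) :: X', (wy, y) :: Y' =>
      simp only [List.map_cons, List.sum_cons] at hsum
      have hwx : 0 ≤ wx := hwX _ List.mem_cons_self
      have hwX' : ∀ p ∈ X', 0 ≤ p.1 := fun p hp => hwX p (List.mem_cons_of_mem _ hp)
      have hwY' : ∀ p ∈ Y', 0 ≤ p.1 := fun p hp => hwY p (List.mem_cons_of_mem _ hp)
      have hsX' : 0 ≤ (X'.map Prod.fst).sum :=
        List.sum_nonneg (by rintro a ha; obtain ⟨p, hp, rfl⟩ := List.mem_map.1 ha; exact hwX' p hp)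
      have hsY' : 0 ≤ (Y'.map Prod.fst).sum :=
        List.sum_nonneg (by rintro a ha; obtain ⟨p, hp, rfl⟩ := List.mem_map.1 ha; exact hwY' p hp)
      simp only [List.length_cons] at hlen
      rw [freeMerge]
      by_cases h : wx < wy
      · rw [if_pos h]
        have hX'ne : X' ≠ [] := by
          intro he; subst he; simp at hsum; linarith
        have hnew : ∀ p ∈ (wy - wx, y) :: Y', 0 ≤ p.1 := by
          intro p hp
          rcases List.mem_cons.1 hp with rfl | hp
          · simp; linarith
          · exact hwY' p hp
        obtain ⟨p, hp, hp0⟩ := ih X' ((wy - wx, y) :: Y')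
          (by simp; omega) hwX' hnew hX'ne (List.cons_ne_nil _ _)
          (by simp; linarith)
        refine ⟨p, ?_, hp0⟩
        rw [getLast?_cons_of_ne_nil _ _ (by intro he; rw [he] at hp; simp at hp), hp]
      · rw [if_neg h]
        push_neg at h
        cases Y' with
        | nil =>
          rw [freeMerge_nil_right]
          simp only [List.map_nil, List.sum_nil] at hsum
          set L : List (ℝ × α) := (wx - wy, x) :: X' with hL
          have hLne : L ≠ [] := List.cons_ne_nil _ _
          refine ⟨L.getLast hLne, ?_, ?_⟩
          · rw [getLast?_cons_of_ne_nil _ _ hLne, List.getLast?_eq_getLast hLne]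
          · have hmem : (L.getLast hLne).1 ∈ L.map Prod.fst :=
              List.mem_map.2 ⟨_, List.getLast_mem hLne, rfl⟩
            refine all_zero_of_sum_zero _ ?_ ?_ _ hmem
            · intro a ha
              obtain ⟨p, hp, rfl⟩ := List.mem_map.1 ha
              rcases List.mem_cons.1 hp with rfl | hp
              · simp; linarith
              · exact hwX' p hp
            · simp [hL]; linarith
        | cons q Y'' =>
          have hnew : ∀ p ∈ (wx - wy, x) :: X', 0 ≤ p.1 := by
            intro p hp
            rcases List.mem_cons.1 hp with rfl | hp
            · simp; linarith
            · exact hwX' p hp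
          obtain ⟨p, hp, hp0⟩ := ih ((wx - wy, x) :: X') (q :: Y'')
            (by simp only [List.length_cons] at hlen ⊢; omega) hnew hwY' (List.cons_ne_nil _ _) (List.cons_ne_nil _ _)
            (by simp at hsum ⊢; linarith)
          refine ⟨p, ?_, hp0⟩
          rw [getLast?_cons_of_ne_nil _ _ (by intro he; rw [he] at hp; simp at hp), hp]

/-- if the total weights of the two input lists are equal, then the last
weight of `freeMerge X Y` is `0`. -/
theorem freeMerge_last_weight_zero {α : Type*} (X Y : List (ℝ × α))
    (hwX : ∀ p ∈ X, 0 ≤ p.1) (hwY : ∀ p ∈ Y, 0 ≤ p.1)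
    (hdisj : ∀ a, a ∈ X.map Prod.snd → a ∉ Y.map Prod.snd)
    (hX : X ≠ []) (hY : Y ≠ [])
    (hsum : (X.map Prod.fst).sum = (Y.map Prod.fst).sum) :
    ∃ p : ℝ × α, (freeMerge X Y).getLast? = some p ∧ p.1 = 0 :=
  freeMerge_aux (X.length + Y.length) X Y le_rfl hwX hwY hX hY hsum
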